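/- Every Hermitian matrix with trace zero is unitarily similar to a hollow matrix (a matrix with all diagonal entries equal to zero). -/

import Mathlib

open Matrix Complex Finset

noncomputable def zet (n : ℕ) : ℂ := Complex.exp (2 * Real.pi * Complex.I / n)

lemma zet_abs (n : ℕ) : ‖zet n‖ = 1 := by
  rw [zet, Complex.norm_exp]
  norm_num [Complex.div_re]

lemma zet_conj_zpow (n : ℕ) (m : ℤ) : (starRingEnd ℂ) ((zet n) ^ m) = (zet n) ^ (-m) := by
  rw [_root_.zpow_neg, ← Complex.inv_eq_conj]
  rw [norm_zpow, zet_abs, _root_.one_zpow]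

lemma key_sum (n : ℕ) (hn : n ≠ 0) (i j : Fin n) :
    ∑ k : Fin n, (zet n) ^ ((k : ℤ) * ((j : ℤ) - (i : ℤ))) = if i = j then (n : ℂ) else 0 := by
  have hprim : IsPrimitiveRoot (zet n) n := Complex.isPrimitiveRoot_exp n hn
  set w : ℂ := (zet n) ^ ((j : ℤ) - (i : ℤ)) with hw
  have hsum : ∑ k : Fin n, (zet n) ^ ((k : ℤ) * ((j : ℤ) - (i : ℤ)))
      = ∑ k : Fin n, w ^ (k : ℕ) := by
    refine Finset.sum_congr rfl fun k _ => ?_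
    rw [hw, ← zpow_natCast (zet n ^ ((j:ℤ) - (i:ℤ))), ← _root_.zpow_mul, mul_comm]
  rw [hsum, Fin.sum_univ_eq_sum_range (fun k => w ^ k)]
  by_cases h : i = j
  · subst h; simp [hw]
  · have hij : (i : ℕ) ≠ (j : ℕ) := fun e => h (Fin.ext e)
    have hi := i.isLt; have hj := j.isLt
    have hwne : w ≠ 1 := by
      rw [hw, Ne, hprim.zpow_eq_one_iff_dvd]
      intro hdvd
      have h1 : (n : ℤ) ≤ |(j : ℤ) - (i : ℤ)| :=
        Int.le_of_dvd (abs_pos.mpr (by omega)) ((dvd_abs _ _).mpr hdvd)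
      rcases abs_cases ((j : ℤ) - (i : ℤ)) with ⟨he, _⟩ | ⟨he, _⟩ <;> omega
    have hwn : w ^ n = 1 := by
      rw [hw, ← zpow_natCast (zet n ^ ((j:ℤ) - (i:ℤ))), ← _root_.zpow_mul, mul_comm,
        _root_.zpow_mul, zpow_natCast, hprim.pow_eq_one, _root_.one_zpow]
    have hg := geom_sum_mul w n
    rw [hwn, sub_self] at hg
    rw [if_neg h]
    exact (mul_eq_zero.mp hg).resolve_right (sub_ne_zero.mpr hwne)

noncomputable def Fm (n : ℕ) : Matrix (Fin n) (Fin n) ℂ :=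
  fun k j => (((Real.sqrt n)⁻¹ : ℝ) : ℂ) * (zet n) ^ ((k : ℤ) * (j : ℤ))

lemma zet_ne_zero (n : ℕ) : zet n ≠ 0 := Complex.exp_ne_zero _

lemma conj_Fm_mul (n : ℕ) (k i j : Fin n) :
    (starRingEnd ℂ) (Fm n k i) * Fm n k j
      = ((n : ℂ))⁻¹ * (zet n) ^ ((k : ℤ) * ((j : ℤ) - (i : ℤ))) := by
  simp only [Fm, _root_.map_mul, Complex.conj_ofReal, zet_conj_zpow]
  rw [show ((k:ℤ) * ((j:ℤ) - (i:ℤ))) = -((k:ℤ) * (i:ℤ)) + (k:ℤ) * (j:ℤ) by ring,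
    zpow_add₀ (zet_ne_zero n)]
  have hs : ((((Real.sqrt n)⁻¹ : ℝ) : ℂ)) * (((Real.sqrt n)⁻¹ : ℝ) : ℂ) = ((n : ℂ))⁻¹ := by
    rw [← Complex.ofReal_mul, ← mul_inv, Real.mul_self_sqrt (Nat.cast_nonneg n)]
    push_cast; ring
  calc _ = ((((Real.sqrt n)⁻¹ : ℝ) : ℂ) * (((Real.sqrt n)⁻¹ : ℝ) : ℂ))
        * ((zet n) ^ (-((k:ℤ) * (i:ℤ))) * (zet n) ^ ((k:ℤ) * (j:ℤ))) := by ring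
    _ = _ := by rw [hs]

lemma conj_Fm_mul_self (n : ℕ) (_hn : n ≠ 0) (k i : Fin n) :
    (starRingEnd ℂ) (Fm n k i) * Fm n k i = ((n : ℂ))⁻¹ := by
  rw [conj_Fm_mul, sub_self, mul_zero, zpow_zero, mul_one]

lemma Fm_mem (n : ℕ) (hn : n ≠ 0) : Fm n ∈ Matrix.unitaryGroup (Fin n) ℂ := by
  rw [Matrix.mem_unitaryGroup_iff']
  ext i j
  rw [Matrix.mul_apply, Matrix.one_apply]
  have : ∀ k : Fin n, star (Fm n) i k * Fm n k j
      = ((n : ℂ))⁻¹ * (zet n) ^ ((k : ℤ) * ((j : ℤ) - (i : ℤ))) := fun k => by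
    rw [Matrix.star_eq_conjTranspose, Matrix.conjTranspose_apply]
    exact conj_Fm_mul n k i j
  rw [Finset.sum_congr rfl fun k _ => this k, ← Finset.mul_sum, key_sum n hn]
  have hn' : (n : ℂ) ≠ 0 := Nat.cast_ne_zero.mpr hn
  split_ifs <;> field_simp <;> simp

theorem stmt_16 (n : ℕ) (H : Matrix (Fin n) (Fin n) ℂ)
    (hH : H.IsHermitian) (htr : H.trace = 0) :
    ∃ U : Matrix (Fin n) (Fin n) ℂ,
      U ∈ Matrix.unitaryGroup (Fin n) ℂ ∧ ∀ i, (Uᴴ * H * U) i i = 0 := by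
  rcases Nat.eq_zero_or_pos n with hn | hn
  · subst hn
    exact ⟨1, Submonoid.one_mem _, fun i => i.elim0⟩
  have hn0 : n ≠ 0 := hn.ne'
  set V : Matrix (Fin n) (Fin n) ℂ := (hH.eigenvectorUnitary : Matrix (Fin n) (Fin n) ℂ) with hV
  set d : Fin n → ℂ := (RCLike.ofReal ∘ hH.eigenvalues) with hd
  refine ⟨V * Fm n, mul_mem hH.eigenvectorUnitary.2 (Fm_mem n hn0), fun i => ?_⟩
  have hdiag : Vᴴ * H * V = Matrix.diagonal d := by
    rw [← Matrix.star_eq_conjTranspose]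
    have h := hH.conjStarAlgAut_star_eigenvectorUnitary
    simp only [Unitary.conjStarAlgAut_star_apply, Unitary.coe_star] at h
    exact h
  have hkey : (V * Fm n)ᴴ * H * (V * Fm n) = (Fm n)ᴴ * Matrix.diagonal d * Fm n := by
    rw [Matrix.conjTranspose_mul, ← hdiag]
    noncomm_ring
  rw [hkey]
  -- trace of d is zero
  have htrd : ∑ k, d k = 0 := by
    have := congrArg Matrix.trace hH.spectral_theorem
    rw [htr, Unitary.conjStarAlgAut_apply, Matrix.trace_mul_cycle,
      Matrix.mem_unitaryGroup_iff'.mp hH.eigenvectorUnitary.2, one_mul,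
      Matrix.trace_diagonal] at this
    exact this.symm
  have : ((Fm n)ᴴ * Matrix.diagonal d * Fm n) i i = ((n : ℂ))⁻¹ * ∑ k, d k := by
    rw [Matrix.mul_apply, Finset.mul_sum]
    refine Finset.sum_congr rfl fun k _ => ?_
    rw [Matrix.mul_diagonal, Matrix.conjTranspose_apply, RCLike.star_def,
      mul_right_comm, conj_Fm_mul_self n hn0]
  rw [this, htrd, mul_zero]
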